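/- Let A be an adversary over a finite set Π, let W, Q ⊆ Π and let s ≥ 1 be an integer. If setcon(A|_{W,Q}) ≥ s, then there exists a live set S ∈ A with S ⊆ W such that setcon(A|_{S,Q}) ≥ s. -/

import Mathlib

variable {α : Type*} [DecidableEq α]

/-- The restriction `A|_P` of an adversary `A` to a set of processes `P`:
the live sets of `A` that are contained in `P`. -/
def restrict (A : Finset (Finset α)) (P : Finset α) : Finset (Finset α) :=
  A.filter fun S => S ⊆ P

/-- The set consensus power `setcon A` of an adversary `A`:
`setcon ∅ = 0` and, for `A ≠ ∅`,
`setcon A = 1 + max_{S ∈ A} min_{a ∈ S} setcon (A|_{S \ {a}})`. -/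
def setcon (A : Finset (Finset α)) : ℕ :=
  if A = ∅ then 0
  else 1 + A.attach.sup fun S =>
    (S.1.attach.image fun a => setcon (restrict A (S.1.erase a.1))).min.untopD 0
termination_by A.card
decreasing_by
  apply Finset.card_lt_card
  rw [Finset.ssubset_def]
  refine ⟨Finset.filter_subset _ _, fun hsub => ?_⟩
  have hmem := hsub S.2
  rw [restrict, Finset.mem_filter] at hmem
  exact Finset.notMem_erase a.1 S.1 (hmem.2 a.2)

/-- The restriction `A|_{P,Q}`: live sets of `A` contained in `P` that intersect `Q`. -/
def restrictTo (A : Finset (Finset α)) (P Q : Finset α) : Finset (Finset α) :=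
  (restrict A P).filter fun S => (S ∩ Q).Nonempty

/-- An adversary is fair if for all `P` and all `Q ⊆ P`,
`setcon (A|_{P,Q}) = min |Q| (setcon (A|_P))`. -/
def Fair (A : Finset (Finset α)) : Prop :=
  ∀ P Q : Finset α, Q ⊆ P →
    setcon (restrictTo A P Q) = min Q.card (setcon (restrict A P))

/-- `csize A`: the minimal cardinality of a hitting set of `A`, i.e. of a set
intersecting every live set of `A`. -/
noncomputable def csize (A : Finset (Finset α)) : ℕ :=
  sInf {k | ∃ H : Finset α, H.card = k ∧ ∀ S ∈ A, (H ∩ S).Nonempty}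


lemma restrict_restrictTo (A : Finset (Finset α)) (W Q P : Finset α) (hPW : P ⊆ W) :
    restrict (restrictTo A W Q) P = restrictTo A P Q := by
  ext T
  simp only [restrict, restrictTo, Finset.mem_filter]
  constructor
  · rintro ⟨⟨⟨hA, _⟩, hQ⟩, hP⟩; exact ⟨⟨hA, hP⟩, hQ⟩
  · rintro ⟨⟨hA, hP⟩, hQ⟩; exact ⟨⟨⟨hA, hP.trans hPW⟩, hQ⟩, hP⟩

/-- if `setcon (A|_{W,Q}) ≥ s ≥ 1`, then there is a live set `S ⊆ W`
with `setcon (A|_{S,Q}) ≥ s`. -/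
theorem exists_liveSet_of_setcon_ge [Fintype α] (A : Finset (Finset α))
    (hne : ∀ S ∈ A, S.Nonempty) (W Q : Finset α) (s : ℕ) (hs : 1 ≤ s)
    (h : s ≤ setcon (restrictTo A W Q)) :
    ∃ S ∈ A, S ⊆ W ∧ s ≤ setcon (restrictTo A S Q) := by
  
  set B := restrictTo A W Q with hB
  have hBne : B ≠ ∅ := by
    intro h0
    rw [setcon, if_pos h0] at h
    omega
  rw [setcon, if_neg hBne] at h
  have hatt : B.attach.Nonempty :=
    Finset.attach_nonempty_iff.2 (Finset.nonempty_iff_ne_empty.2 hBne)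
  obtain ⟨S, hSmem, hsup⟩ := Finset.exists_mem_eq_sup B.attach hatt
    (fun S => (S.1.attach.image fun a => setcon (restrict B (S.1.erase a.1))).min.untopD 0)
  rw [hsup] at h
  have hSB : S.1 ∈ restrictTo A W Q := S.2
  rw [restrictTo, restrict, Finset.mem_filter, Finset.mem_filter] at hSB
  obtain ⟨⟨hSA, hSW⟩, hSQ⟩ := hSB
  refine ⟨S.1, hSA, hSW, ?_⟩
  set B' := restrictTo A S.1 Q with hB'
  have hSB' : S.1 ∈ B' := by
    rw [hB', restrictTo, restrict, Finset.mem_filter, Finset.mem_filter]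
    exact ⟨⟨hSA, le_refl _⟩, hSQ⟩
  have hB'ne : B' ≠ ∅ := Finset.ne_empty_of_mem hSB'
  rw [setcon, if_neg hB'ne]
  have hkey : ∀ a ∈ S.1.attach, restrict B' (S.1.erase a.1) = restrict B (S.1.erase a.1) := by
    intro a _
    exact (restrict_restrictTo A S.1 Q _ (Finset.erase_subset _ _)).trans
      (restrict_restrictTo A W Q _ ((Finset.erase_subset _ _).trans hSW)).symm
  have himg : (S.1.attach.image fun a => setcon (restrict B' (S.1.erase a.1)))
      = (S.1.attach.image fun a => setcon (restrict B (S.1.erase a.1))) :=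
    Finset.image_congr (fun a ha => by rw [hkey a ha])
  have hle := Finset.le_sup (f := fun T : {x // x ∈ B'} =>
      (T.1.attach.image fun a => setcon (restrict B' (T.1.erase a.1))).min.untopD 0)
    (Finset.mem_attach B' ⟨S.1, hSB'⟩)
  simp only at hle
  rw [himg] at hle
  omega
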